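/- Let x₁, x₂, x₃, x₄ be the vertices, listed in cyclic order, of a strictly convex quadrilateral in the Euclidean plane, and for {i, j, k, l} = {1, 2, 3, 4} let α_{i,j} denote the angle ∠x_k x_i x_l (the angle at vertex x_i subtended by the segment joining the two points other than x_i and x_j). Assume α_{1,3} + α_{3,1} ≤ π. Then the multiset of angles of any triangle with side lengths dist(x₁,x₂)·dist(x₃,x₄), dist(x₁,x₃)·dist(x₂,x₄), dist(x₁,x₄)·dist(x₂,x₃) is {α_{2,3} - α_{3,2}, α_{2,1} - α_{1,2}, α_{1,3} + α_{3,1}}; i.e., there exist points P, Q, R in the plane whose pairwise distances are (in some order) these three products and whose angles are exactly α_{2,3} - α_{3,2}, α_{2,1} - α_{1,2}, and α_{1,3} + α_{3,1}. -/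

import Mathlib

open EuclideanGeometry

/-- A strictly convex quadrilateral `x₁x₂x₃x₄` in the plane: no three vertices are collinear,
each vertex lies outside the convex hull of the other three, and the vertices are listed in
cyclic order (equivalently, the diagonals `x₁x₃` and `x₂x₄` meet). -/
def IsStrictConvexQuad (x₁ x₂ x₃ x₄ : EuclideanSpace ℝ (Fin 2)) : Prop :=
  ¬ Collinear ℝ ({x₁, x₂, x₃} : Set (EuclideanSpace ℝ (Fin 2))) ∧
  ¬ Collinear ℝ ({x₁, x₂, x₄} : Set (EuclideanSpace ℝ (Fin 2))) ∧
  ¬ Collinear ℝ ({x₁, x₃, x₄} : Set (EuclideanSpace ℝ (Fin 2))) ∧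
  ¬ Collinear ℝ ({x₂, x₃, x₄} : Set (EuclideanSpace ℝ (Fin 2))) ∧
  x₁ ∉ convexHull ℝ ({x₂, x₃, x₄} : Set (EuclideanSpace ℝ (Fin 2))) ∧
  x₂ ∉ convexHull ℝ ({x₁, x₃, x₄} : Set (EuclideanSpace ℝ (Fin 2))) ∧
  x₃ ∉ convexHull ℝ ({x₁, x₂, x₄} : Set (EuclideanSpace ℝ (Fin 2))) ∧
  x₄ ∉ convexHull ℝ ({x₁, x₂, x₃} : Set (EuclideanSpace ℝ (Fin 2))) ∧
  (segment ℝ x₁ x₃ ∩ segment ℝ x₂ x₄).Nonempty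


noncomputable section CrelleAux

private lemma arccos_cos_abs {θ : ℝ} (h1 : -Real.pi ≤ θ) (h2 : θ ≤ Real.pi) :
    Real.arccos (Real.cos θ) = |θ| := by
  rcases le_or_gt 0 θ with h | h
  · rw [abs_of_nonneg h, Real.arccos_cos h h2]
  · rw [abs_of_neg h, ← Real.cos_neg, Real.arccos_cos (by linarith) (by linarith)]

private lemma cAngle_eq_abs_arg {z w : ℂ} (hz : z ≠ 0) (hw : w ≠ 0) :
    InnerProductGeometry.angle z w = |(w / z).arg| := by
  have hq : w / z ≠ 0 := div_ne_zero hw hz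
  have hcos : (inner ℝ z w : ℝ) / (‖z‖ * ‖w‖) = Real.cos ((w / z).arg) := by
    rw [Complex.inner, Complex.cos_arg hq]
    have habs : ‖z‖ ≠ 0 := norm_ne_zero_iff.2 hz
    have habsw : ‖w‖ ≠ 0 := norm_ne_zero_iff.2 hw
    have hns : Complex.normSq z ≠ 0 := by simpa using Complex.normSq_pos.2 hz |>.ne'
    rw [Complex.div_re, norm_div]
    simp only [Complex.mul_re, Complex.conj_re, Complex.conj_im, ← Complex.sq_norm]
    have h2 : ‖z‖ ^ 2 ≠ 0 := pow_ne_zero 2 habs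
    field_simp
    ring
  rw [InnerProductGeometry.angle, hcos,
    arccos_cos_abs (Complex.neg_pi_lt_arg _).le (Complex.arg_le_pi _)]

private lemma cangle_eq (p q r : ℂ) (hp : p ≠ q) (hr : r ≠ q) :
    ∠ p q r = |((r - q) / (p - q)).arg| := by
  show InnerProductGeometry.angle (p -ᵥ q) (r -ᵥ q) = _
  rw [vsub_eq_sub, vsub_eq_sub]
  exact cAngle_eq_abs_arg (sub_ne_zero.2 hp) (sub_ne_zero.2 hr)


noncomputable section CrelleAux

private def cr (z w : ℂ) : ℝ := z.re * w.im - z.im * w.re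

private lemma im_div_eq {z w : ℂ} : (w / z).im = cr z w / Complex.normSq z := by
  rw [Complex.div_im, cr]; ring

private lemma arg_pos_of_cr_pos {z w : ℂ} (hz : z ≠ 0) (h : 0 < cr z w) :
    (w / z).arg ∈ Set.Ioo 0 Real.pi := by
  have him : 0 < (w / z).im := by
    rw [im_div_eq]; exact div_pos h (Complex.normSq_pos.2 hz)
  constructor
  · rcases (Complex.arg_nonneg_iff.2 him.le).lt_or_eq with h' | h'
    · exact h'
    · exact absurd (Complex.arg_eq_zero_iff.1 h'.symm).2 him.ne'
  · exact Complex.arg_lt_pi_iff.2 (Or.inr him.ne')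

private lemma arg_neg_of_cr_neg {z w : ℂ} (h : cr z w < 0) :
    (w / z).arg ∈ Set.Ioo (-Real.pi) 0 := by
  rcases eq_or_ne z 0 with rfl | hz
  · simp [cr] at h
  have him : (w / z).im < 0 := by
    rw [im_div_eq]; exact div_neg_of_neg_of_pos h (Complex.normSq_pos.2 hz)
  exact ⟨Complex.neg_pi_lt_arg _, Complex.arg_neg_iff.2 him⟩
set_option maxHeartbeats 1600000 in
private lemma crelle_key (a b c d : ℂ)
    (hab : a ≠ b) (hac : a ≠ c) (had : a ≠ d) (hbc : b ≠ c) (hbd : b ≠ d) (hcd : c ≠ d)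
    (h124 : 0 < cr (b - a) (d - a))
    (h134 : 0 < cr (c - a) (d - a))
    (h234 : 0 < cr (c - b) (d - b))
    (hangle : ∠ b a d + ∠ b c d ≤ Real.pi) :
    ∃ P Q R : ℂ,
      dist P Q = dist a b * dist c d ∧ dist P R = dist a c * dist b d ∧
        dist Q R = dist a d * dist b c ∧
      ∠ Q P R = ∠ a b d - ∠ a c d ∧ ∠ P Q R = ∠ b a d + ∠ b c d ∧
        ∠ P R Q = ∠ c b d - ∠ c a d := by
  have hπ := Real.pi_pos
  have hba : b - a ≠ 0 := sub_ne_zero.2 hab.symm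
  have hca : c - a ≠ 0 := sub_ne_zero.2 hac.symm
  have hda : d - a ≠ 0 := sub_ne_zero.2 had.symm
  have hcb : c - b ≠ 0 := sub_ne_zero.2 hbc.symm
  have hdb : d - b ≠ 0 := sub_ne_zero.2 hbd.symm
  have hdc : d - c ≠ 0 := sub_ne_zero.2 hcd.symm
  have hab' : a - b ≠ 0 := sub_ne_zero.2 hab
  have hac' : a - c ≠ 0 := sub_ne_zero.2 hac
  have had' : a - d ≠ 0 := sub_ne_zero.2 had
  have hbc' : b - c ≠ 0 := sub_ne_zero.2 hbc
  have hbd' : b - d ≠ 0 := sub_ne_zero.2 hbd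
  have hcd' : c - d ≠ 0 := sub_ne_zero.2 hcd
  set u : ℂ := (a - b) * (c - d) with hu
  set v : ℂ := (a - c) * (b - d) with hv
  set w : ℂ := (a - d) * (b - c) with hw
  have hu0 : u ≠ 0 := mul_ne_zero hab' hcd'
  have hv0 : v ≠ 0 := mul_ne_zero hac' hbd'
  have hw0 : w ≠ 0 := mul_ne_zero had' hbc'
  have hvu : v - u = w := by rw [hu, hv, hw]; ring
  have hvu' : v ≠ u := sub_ne_zero.1 (hvu ▸ hw0)
  -- the six basic quotients
  set q₁ : ℂ := (d - a) / (b - a) with hq₁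
  set q₃ : ℂ := (b - c) / (d - c) with hq₃
  set p' : ℂ := (a - c) / (d - c) with hp'
  set q' : ℂ := (d - b) / (a - b) with hq'
  set r' : ℂ := (d - a) / (c - a) with hr'
  set s' : ℂ := (c - b) / (d - b) with hs'
  have hq₁0 : q₁ ≠ 0 := div_ne_zero hda hba
  have hq₃0 : q₃ ≠ 0 := div_ne_zero hbc' hdc
  have hp'0 : p' ≠ 0 := div_ne_zero hac' hdc
  have hq'0 : q' ≠ 0 := div_ne_zero hdb hab'
  have hr'0 : r' ≠ 0 := div_ne_zero hda hca
  have hs'0 : s' ≠ 0 := div_ne_zero hcb hdb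
  -- signs of the arguments
  have m₁ : q₁.arg ∈ Set.Ioo 0 Real.pi := arg_pos_of_cr_pos hba h124
  have m₃ : q₃.arg ∈ Set.Ioo 0 Real.pi := by
    refine arg_pos_of_cr_pos hdc ?_
    have e : cr (d - c) (b - c) = cr (c - b) (d - b) := by simp [cr]; ring
    rw [e]; exact h234
  have mp : p'.arg ∈ Set.Ioo 0 Real.pi := by
    refine arg_pos_of_cr_pos hdc ?_
    have e : cr (d - c) (a - c) = cr (c - a) (d - a) := by simp [cr]; ring
    rw [e]; exact h134
  have mq : q'.arg ∈ Set.Ioo (-Real.pi) 0 := by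
    refine arg_neg_of_cr_neg ?_
    have e : cr (a - b) (d - b) = -cr (b - a) (d - a) := by simp [cr]; ring
    rw [e]; linarith
  have mr : r'.arg ∈ Set.Ioo 0 Real.pi := arg_pos_of_cr_pos hca h134
  have ms : s'.arg ∈ Set.Ioo (-Real.pi) 0 := by
    refine arg_neg_of_cr_neg ?_
    have e : cr (d - b) (c - b) = -cr (c - b) (d - b) := by simp [cr]; ring
    rw [e]; linarith
  -- the quadrilateral angles
  have hA1 : ∠ b a d = q₁.arg := by
    rw [cangle_eq b a d hab.symm had.symm, ← hq₁, abs_of_pos m₁.1]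
  have hA3 : ∠ b c d = q₃.arg := by
    rw [EuclideanGeometry.angle_comm, cangle_eq d c b hcd.symm hbc, ← hq₃,
      abs_of_pos m₃.1]
  have hγ3 : ∠ a c d = p'.arg := by
    rw [EuclideanGeometry.angle_comm, cangle_eq d c a hcd.symm hac, ← hp',
      abs_of_pos mp.1]
  have hδ2 : ∠ a b d = -q'.arg := by
    rw [cangle_eq a b d hab hbd.symm, ← hq', abs_of_neg mq.2]
  have hγ1 : ∠ c a d = r'.arg := by
    rw [cangle_eq c a d hac.symm had.symm, ← hr', abs_of_pos mr.1]
  have hε2 : ∠ c b d = -s'.arg := by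
    rw [EuclideanGeometry.angle_comm, cangle_eq d b c hbd.symm hbc.symm, ← hs',
      abs_of_neg ms.2]
  -- identities
  have i1 : (v - u) / ((0 : ℂ) - u) = q₁ * q₃ := by
    rw [hvu, hu, hw, hq₁, hq₃]; field_simp; ring
  have i2 : (v - 0) / (u - 0) = p' * q' := by
    rw [sub_zero, sub_zero, hu, hv, hp', hq']; field_simp; ring
  have i3 : (u - v) / ((0 : ℂ) - v) = r' * s' := by
    rw [hu, hv, hr', hs']; field_simp; ring
  have i4 : p' * q' * (r' * s') = -(q₁ * q₃) := by
    rw [hp', hq', hr', hs', hq₁, hq₃]; field_simp; ring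
  -- arguments of products
  have harg1 : (q₁ * q₃).arg = q₁.arg + q₃.arg := by
    refine Complex.arg_mul hq₁0 hq₃0 ⟨by linarith [m₁.1, m₃.1], ?_⟩
    rw [← hA1, ← hA3]; exact hangle
  have harg2 : (p' * q').arg = p'.arg + q'.arg :=
    Complex.arg_mul hp'0 hq'0 ⟨by linarith [mp.1, mq.1], by linarith [mp.2, mq.2]⟩
  have harg3 : (r' * s').arg = r'.arg + s'.arg :=
    Complex.arg_mul hr'0 hs'0 ⟨by linarith [mr.1, ms.1], by linarith [mr.2, ms.2]⟩
  -- triangle angles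
  have hu0' : (0 : ℂ) ≠ u := hu0.symm
  have hv0' : (0 : ℂ) ≠ v := hv0.symm
  have tPQR : ∠ (0 : ℂ) u v = q₁.arg + q₃.arg := by
    rw [cangle_eq 0 u v hu0' hvu', i1, harg1, abs_of_pos (by linarith [m₁.1, m₃.1])]
  have tQPR : ∠ u (0 : ℂ) v = |p'.arg + q'.arg| := by
    rw [cangle_eq u 0 v hu0 hv0, i2, harg2]
  have tPRQ : ∠ (0 : ℂ) v u = |r'.arg + s'.arg| := by
    rw [cangle_eq 0 v u hv0' hvu'.symm, i3, harg3]
  -- the mod 2π relation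
  have hub : q₁.arg + q₃.arg ≤ Real.pi := by rw [← hA1, ← hA3]; exact hangle
  have htri : ∠ d a c + ∠ a c d + ∠ c d a = Real.pi :=
    EuclideanGeometry.angle_add_angle_add_angle_eq_pi c had
  have hsum : r'.arg + p'.arg ≤ Real.pi := by
    have h0 := EuclideanGeometry.angle_nonneg c d a
    rw [EuclideanGeometry.angle_comm d a c, hγ1, hγ3] at htri
    linarith
  have hX : p'.arg + q'.arg + (r'.arg + s'.arg) = q₁.arg + q₃.arg - Real.pi := by
    have hcoe : ((p'.arg + q'.arg + (r'.arg + s'.arg) : ℝ) : Real.Angle) =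
        ((q₁.arg + q₃.arg + Real.pi : ℝ) : Real.Angle) := by
      have c1 : ((p' * q' * (r' * s')).arg : Real.Angle) =
          (((p' * q').arg : ℝ) : Real.Angle) + (((r' * s').arg : ℝ) : Real.Angle) :=
        Complex.arg_mul_coe_angle (mul_ne_zero hp'0 hq'0) (mul_ne_zero hr'0 hs'0)
      have c2 : ((p' * q' * (r' * s')).arg : Real.Angle) =
          (((q₁ * q₃).arg : ℝ) : Real.Angle) + ((Real.pi : ℝ) : Real.Angle) := by
        rw [i4]; exact Complex.arg_neg_coe_angle (mul_ne_zero hq₁0 hq₃0)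
      rw [Real.Angle.coe_add, ← harg2, ← harg3, ← c1, c2, harg1]
      norm_cast
    obtain ⟨k, hk⟩ := Real.Angle.angle_eq_iff_two_pi_dvd_sub.1 hcoe
    have h2π : (0 : ℝ) < 2 * Real.pi := by linarith
    have hDlt : 2 * Real.pi * (k : ℝ) < 0 := by
      rw [← hk]; linarith [hsum, mq.2, ms.2, m₁.1, m₃.1]
    have hDgt : -(4 * Real.pi) < 2 * Real.pi * (k : ℝ) := by
      rw [← hk]; linarith [mp.1, mq.1, mr.1, ms.1, hub]
    have hk1' : k < 0 := by
      by_contra hcon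
      push_neg at hcon
      have h0 : (0 : ℝ) ≤ (k : ℝ) := by exact_mod_cast hcon
      have := mul_nonneg h2π.le h0
      linarith
    have hk2' : (-2 : ℤ) < k := by
      by_contra hcon
      push_neg at hcon
      have h0 : (k : ℝ) ≤ -2 := by exact_mod_cast hcon
      have := mul_le_mul_of_nonneg_left h0 h2π.le
      linarith
    have hkk : k = -1 := by omega
    rw [hkk] at hk
    push_cast at hk
    linarith
  -- triangle angle sum
  have htsum : ∠ v (0 : ℂ) u + ∠ (0 : ℂ) u v + ∠ u v (0 : ℂ) = Real.pi :=
    EuclideanGeometry.angle_add_angle_add_angle_eq_pi u hv0'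
  rw [EuclideanGeometry.angle_comm v 0 u, EuclideanGeometry.angle_comm u v 0] at htsum
  rw [tQPR, tPQR, tPRQ] at htsum
  have habs1 : |p'.arg + q'.arg| = -(p'.arg + q'.arg) := by
    have h1 := neg_le_abs (p'.arg + q'.arg)
    have h2 := neg_le_abs (r'.arg + s'.arg)
    linarith
  have habs2 : |r'.arg + s'.arg| = -(r'.arg + s'.arg) := by
    have h1 := neg_le_abs (p'.arg + q'.arg)
    have h2 := neg_le_abs (r'.arg + s'.arg)
    linarith
  refine ⟨0, u, v, ?_, ?_, ?_, ?_, ?_, ?_⟩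
  · rw [Complex.dist_eq, zero_sub, norm_neg, hu, norm_mul, Complex.dist_eq, Complex.dist_eq]
  · rw [Complex.dist_eq, zero_sub, norm_neg, hv, norm_mul, Complex.dist_eq, Complex.dist_eq]
  · have : u - v = -((a - d) * (b - c)) := by rw [hu, hv]; ring
    rw [Complex.dist_eq, this, norm_neg, norm_mul, Complex.dist_eq, Complex.dist_eq]
  · rw [tQPR, habs1, hδ2, hγ3]; ring
  · rw [tPQR, hA1, hA3]
  · rw [tPRQ, habs2, hε2, hγ1]; ring

private lemma multiset_perm23 (x y z : ℝ) : ({x, y, z} : Multiset ℝ) = {x, z, y} := by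
  show x ::ₘ y ::ₘ z ::ₘ 0 = x ::ₘ z ::ₘ y ::ₘ 0
  rw [Multiset.cons_swap y z]

private lemma multiset_perm13 (x y z : ℝ) : ({x, y, z} : Multiset ℝ) = {z, y, x} := by
  show x ::ₘ y ::ₘ z ::ₘ 0 = z ::ₘ y ::ₘ x ::ₘ 0
  rw [Multiset.cons_swap x y, Multiset.cons_swap x z, Multiset.cons_swap y z]

private lemma cr_conj (z w : ℂ) :
    cr ((starRingEnd ℂ) z) ((starRingEnd ℂ) w) = -cr z w := by
  simp [cr]; ring

private lemma cangle_conj (p q r : ℂ) :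
    ∠ ((starRingEnd ℂ) p) ((starRingEnd ℂ) q) ((starRingEnd ℂ) r) = ∠ p q r := by
  have h := Complex.conjLIE.toAffineIsometryEquiv.toAffineIsometry.angle_map p q r
  simpa [AffineIsometryEquiv.coe_toAffineIsometry,
    LinearIsometryEquiv.coe_toAffineIsometryEquiv, Complex.conjLIE_apply] using h

private lemma crelle_key₂ (a b c d : ℂ)
    (hab : a ≠ b) (hac : a ≠ c) (had : a ≠ d) (hbc : b ≠ c) (hbd : b ≠ d) (hcd : c ≠ d)
    (hop1 : cr (c - a) (b - a) * cr (c - a) (d - a) < 0)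
    (hop2 : cr (d - b) (a - b) * cr (d - b) (c - b) < 0)
    (hangle : ∠ b a d + ∠ b c d ≤ Real.pi) :
    ∃ P Q R : ℂ,
      dist P Q = dist a b * dist c d ∧ dist P R = dist a c * dist b d ∧
        dist Q R = dist a d * dist b c ∧
      ∠ Q P R = ∠ a b d - ∠ a c d ∧ ∠ P Q R = ∠ b a d + ∠ b c d ∧
        ∠ P R Q = ∠ c b d - ∠ c a d := by
  have id1 : cr (c - a) (b - a) = -cr (b - a) (c - a) := by simp [cr]; ring
  have id2 : cr (d - b) (a - b) = cr (b - a) (d - a) := by simp [cr]; ring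
  have id3 : cr (d - b) (c - b) = -cr (c - b) (d - b) := by simp [cr]; ring
  have id4 : cr (b - a) (c - a) + cr (c - a) (d - a)
      = cr (b - a) (d - a) + cr (c - b) (d - b) := by simp [cr]; ring
  rw [id1] at hop1
  rw [id2, id3] at hop2
  have hprod1 : 0 < cr (b - a) (c - a) * cr (c - a) (d - a) := by nlinarith
  have hprod2 : 0 < cr (b - a) (d - a) * cr (c - b) (d - b) := by nlinarith
  rcases mul_pos_iff.1 hprod1 with ⟨h123, h134⟩ | ⟨h123, h134⟩
  · -- counterclockwise case
    rcases mul_pos_iff.1 hprod2 with ⟨h124, h234⟩ | ⟨h124, h234⟩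
    · exact crelle_key a b c d hab hac had hbc hbd hcd h124 h134 h234 hangle
    · exfalso; linarith
  · -- clockwise case: conjugate
    rcases mul_pos_iff.1 hprod2 with ⟨h124, h234⟩ | ⟨h124, h234⟩
    · exfalso; linarith
    · have hinj : Function.Injective (starRingEnd ℂ) := (starRingEnd ℂ).injective
      have csub : ∀ z w : ℂ, (starRingEnd ℂ) z - (starRingEnd ℂ) w
          = (starRingEnd ℂ) (z - w) := fun z w => (map_sub _ _ _).symm
      obtain ⟨P, Q, R, d1, d2, d3, a1, a2, a3⟩ :=
        crelle_key ((starRingEnd ℂ) a) ((starRingEnd ℂ) b) ((starRingEnd ℂ) c)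
          ((starRingEnd ℂ) d)
          (fun e => hab (hinj e)) (fun e => hac (hinj e)) (fun e => had (hinj e))
          (fun e => hbc (hinj e)) (fun e => hbd (hinj e)) (fun e => hcd (hinj e))
          (by rw [csub, csub, cr_conj]; linarith)
          (by rw [csub, csub, cr_conj]; linarith)
          (by rw [csub, csub, cr_conj]; linarith)
          (by rw [cangle_conj, cangle_conj]; exact hangle)
      rw [Complex.dist_conj_conj, Complex.dist_conj_conj] at d1
      rw [Complex.dist_conj_conj, Complex.dist_conj_conj] at d2
      rw [Complex.dist_conj_conj, Complex.dist_conj_conj] at d3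
      rw [cangle_conj, cangle_conj] at a1
      rw [cangle_conj, cangle_conj] at a2
      rw [cangle_conj, cangle_conj] at a3
      exact ⟨P, Q, R, d1, d2, d3, a1, a2, a3⟩

private def crelleF (m : Multiset ℝ) (t : ℝ) : ℝ :=
  Real.arccos (((Multiset.map (fun x => x ^ 2) m).sum - 2 * t ^ 2) * t / (2 * m.prod))

private lemma angle_eq_arccos {V P : Type*} [NormedAddCommGroup V] [InnerProductSpace ℝ V]
    [MetricSpace P] [NormedAddTorsor V P] {p q r : P} (hq : p ≠ r) (hr : q ≠ r) :
    ∠ p r q = Real.arccos ((dist p r ^ 2 + dist q r ^ 2 - dist p q ^ 2) /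
      (2 * dist p r * dist q r)) := by
  have h := EuclideanGeometry.law_cos p r q
  have h1 : dist p r ≠ 0 := dist_ne_zero.2 hq
  have h2 : dist q r ≠ 0 := dist_ne_zero.2 hr
  have hcos : Real.cos (∠ p r q) = (dist p r ^ 2 + dist q r ^ 2 - dist p q ^ 2) /
      (2 * dist p r * dist q r) := by
    have h2' : (2 : ℝ) * dist p r * dist q r ≠ 0 := by
      simp [h1, h2]
    rw [eq_div_iff h2']
    linear_combination h
  rw [← hcos, Real.arccos_cos (EuclideanGeometry.angle_nonneg _ _ _)
    (EuclideanGeometry.angle_le_pi _ _ _)]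

private lemma tri_angles_map {V P : Type*} [NormedAddCommGroup V] [InnerProductSpace ℝ V]
    [MetricSpace P] [NormedAddTorsor V P] (p q r : P) (h1 : p ≠ q) (h2 : p ≠ r) (h3 : q ≠ r) :
    ({∠ q p r, ∠ p q r, ∠ p r q} : Multiset ℝ) =
      Multiset.map (crelleF ({dist p q, dist p r, dist q r} : Multiset ℝ))
        ({dist p q, dist p r, dist q r} : Multiset ℝ) := by
  have hpq : dist p q ≠ 0 := dist_ne_zero.2 h1
  have hpr : dist p r ≠ 0 := dist_ne_zero.2 h2
  have hqr : dist q r ≠ 0 := dist_ne_zero.2 h3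
  have hs : (Multiset.map (fun x => x ^ 2)
      ({dist p q, dist p r, dist q r} : Multiset ℝ)).sum
      = dist p q ^ 2 + dist p r ^ 2 + dist q r ^ 2 := by
    simp [Multiset.insert_eq_cons]; ring
  have hp : ({dist p q, dist p r, dist q r} : Multiset ℝ).prod
      = dist p q * dist p r * dist q r := by
    simp [Multiset.insert_eq_cons]; ring
  have e1 : crelleF ({dist p q, dist p r, dist q r} : Multiset ℝ) (dist p q) = ∠ p r q := by
    rw [crelleF, hs, hp, angle_eq_arccos h2 h3]
    congr 1
    field_simp
    ring
  have e2 : crelleF ({dist p q, dist p r, dist q r} : Multiset ℝ) (dist p r) = ∠ p q r := by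
    rw [crelleF, hs, hp, angle_eq_arccos h1 h3.symm]
    rw [dist_comm r q]
    congr 1
    field_simp
    ring
  have e3 : crelleF ({dist p q, dist p r, dist q r} : Multiset ℝ) (dist q r) = ∠ q p r := by
    rw [crelleF, hs, hp, angle_eq_arccos h1.symm h2.symm]
    rw [dist_comm q p, dist_comm r p]
    congr 1
    field_simp
    ring
  have hmap : Multiset.map (crelleF ({dist p q, dist p r, dist q r} : Multiset ℝ))
      ({dist p q, dist p r, dist q r} : Multiset ℝ)
      = ({∠ p r q, ∠ p q r, ∠ q p r} : Multiset ℝ) := by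
    simp only [Multiset.insert_eq_cons] at e1 e2 e3 ⊢
    rw [Multiset.map_cons, Multiset.map_cons, Multiset.map_singleton, e1, e2, e3]
  rw [hmap, multiset_perm13]

private lemma opp_sign {u v A B : ℝ} (hu : 0 ≤ u) (hv : 0 ≤ v) (huv : u + v = 1)
    (hA : A ≠ 0) (hB : B ≠ 0) (h : u * A + v * B = 0) : A * B < 0 := by
  have hu' : u ≠ 0 := by
    rintro rfl
    simp only [zero_mul, zero_add] at h huv
    subst huv
    rcases mul_eq_zero.1 h with h' | h'
    · norm_num at h'
    · exact hB h'
  have hv' : v ≠ 0 := by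
    rintro rfl
    simp only [zero_mul, add_zero] at h huv
    subst huv
    rcases mul_eq_zero.1 h with h' | h'
    · norm_num at h'
    · exact hA h'
  have hu2 : 0 < u := hu.lt_of_ne (Ne.symm hu')
  have hv2 : 0 < v := hv.lt_of_ne (Ne.symm hv')
  rcases hA.lt_or_gt with h1 | h1 <;> rcases hB.lt_or_gt with h2 | h2
  · nlinarith
  · exact mul_neg_of_neg_of_pos h1 h2
  · exact mul_neg_of_pos_of_neg h1 h2
  · nlinarith

private lemma collinear_aux (p q r : EuclideanSpace ℝ (Fin 2)) (t : ℝ)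
    (h : r - p = t • (q - p)) :
    Collinear ℝ ({p, q, r} : Set (EuclideanSpace ℝ (Fin 2))) := by
  rw [collinear_iff_exists_forall_eq_smul_vadd]
  refine ⟨p, q - p, ?_⟩
  rintro x hx
  simp only [Set.mem_insert_iff, Set.mem_singleton_iff] at hx
  rcases hx with rfl | rfl | rfl
  · exact ⟨0, by simp⟩
  · exact ⟨1, by simp⟩
  · refine ⟨t, ?_⟩
    rw [vadd_eq_add, ← h]
    abel

private lemma cr_ne_zero (f : ℂ ≃ₗᵢ[ℝ] EuclideanSpace ℝ (Fin 2)) {p q r : ℂ}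
    (h : ¬ Collinear ℝ ({f p, f q, f r} : Set (EuclideanSpace ℝ (Fin 2)))) :
    cr (q - p) (r - p) ≠ 0 := by
  intro h0
  apply h
  rcases eq_or_ne q p with rfl | hqp
  · refine Collinear.subset ?_ (collinear_pair ℝ (f q) (f r))
    intro y hy
    simp only [Set.mem_insert_iff, Set.mem_singleton_iff] at hy ⊢
    tauto
  · have hqp' : q - p ≠ 0 := sub_ne_zero.2 hqp
    set t := ((r - p) / (q - p)).re with ht
    have him : ((r - p) / (q - p)).im = 0 := by
      rw [im_div_eq, h0, zero_div]
    have hrp : r - p = t • (q - p) := by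
      have hq : ((r - p) / (q - p)) = (t : ℂ) := by
        apply Complex.ext
        · simp [ht]
        · simp [him]
      calc r - p = (r - p) / (q - p) * (q - p) := by field_simp
        _ = (t : ℂ) * (q - p) := by rw [hq]
        _ = t • (q - p) := Complex.real_smul.symm
    have him2 : f r - f p = t • (f q - f p) := by
      rw [← map_sub, ← map_sub, hrp, map_smul]
    exact collinear_aux (f p) (f q) (f r) t him2

private lemma cr_comb (z w w' : ℂ) (α β : ℝ) :
    cr z (α • w + β • w') = α * cr z w + β * cr z w' := by
  simp [cr, Complex.add_re, Complex.add_im, Complex.smul_re, Complex.smul_im]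
  ring

private lemma cr_smul_self (z : ℂ) (α : ℝ) : cr z (α • z) = 0 := by
  simp [cr, Complex.smul_re, Complex.smul_im]
  ring

private lemma pairnc {p q r : EuclideanSpace ℝ (Fin 2)}
    (hn : ¬ Collinear ℝ ({p, q, r} : Set (EuclideanSpace ℝ (Fin 2)))) :
    p ≠ q ∧ p ≠ r ∧ q ≠ r := by
  refine ⟨fun he => hn ?_, fun he => hn ?_, fun he => hn ?_⟩
  · subst he
    refine Collinear.subset ?_ (collinear_pair ℝ p r)
    intro y hy
    simp only [Set.mem_insert_iff, Set.mem_singleton_iff] at hy ⊢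
    tauto
  · subst he
    refine Collinear.subset ?_ (collinear_pair ℝ p q)
    intro y hy
    simp only [Set.mem_insert_iff, Set.mem_singleton_iff] at hy ⊢
    tauto
  · subst he
    refine Collinear.subset ?_ (collinear_pair ℝ p q)
    intro y hy
    simp only [Set.mem_insert_iff, Set.mem_singleton_iff] at hy ⊢
    tauto

end CrelleAux

set_option maxHeartbeats 1600000 in
/-- For a strictly convex quadrilateral `x₁x₂x₃x₄` with `α₁₃ + α₃₁ ≤ π`, the Crelle triangle
(with side lengths `x₁x₂·x₃x₄`, `x₁x₃·x₂x₄`, `x₁x₄·x₂x₃`) exists and its angles are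
`α₂₃ - α₃₂`, `α₂₁ - α₁₂`, `α₁₃ + α₃₁`. -/
theorem crelle_triangle_angles_convex_quad (x₁ x₂ x₃ x₄ : EuclideanSpace ℝ (Fin 2))
    (h : IsStrictConvexQuad x₁ x₂ x₃ x₄)
    (hangle : ∠ x₂ x₁ x₄ + ∠ x₂ x₃ x₄ ≤ Real.pi) :
    (∃ P Q R : EuclideanSpace ℝ (Fin 2),
      ({dist P Q, dist P R, dist Q R} : Multiset ℝ) =
        ({dist x₁ x₂ * dist x₃ x₄, dist x₁ x₃ * dist x₂ x₄, dist x₁ x₄ * dist x₂ x₃} : Multiset ℝ)) ∧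
    ∀ P Q R : EuclideanSpace ℝ (Fin 2),
      ({dist P Q, dist P R, dist Q R} : Multiset ℝ) =
        ({dist x₁ x₂ * dist x₃ x₄, dist x₁ x₃ * dist x₂ x₄, dist x₁ x₄ * dist x₂ x₃} : Multiset ℝ) →
      ({∠ Q P R, ∠ P Q R, ∠ P R Q} : Multiset ℝ) =
        ({∠ x₁ x₂ x₄ - ∠ x₁ x₃ x₄, ∠ x₃ x₂ x₄ - ∠ x₃ x₁ x₄, ∠ x₂ x₁ x₄ + ∠ x₂ x₃ x₄} : Multiset ℝ) := by
  obtain ⟨hc123, hc124, hc134, hc234, -, -, -, -, m, hm1, hm2⟩ := h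
  -- distinctness of the vertices
  obtain ⟨hx12, hx13, hx23⟩ := pairnc hc123
  obtain ⟨-, hx14, hx24⟩ := pairnc hc124
  obtain ⟨-, -, hx34⟩ := pairnc hc234
  -- move to the complex plane
  set f : ℂ ≃ₗᵢ[ℝ] EuclideanSpace ℝ (Fin 2) :=
    Complex.isometryOfOrthonormal (EuclideanSpace.basisFun (Fin 2) ℝ) with hfdef
  set z₁ := f.symm x₁ with hz₁
  set z₂ := f.symm x₂ with hz₂
  set z₃ := f.symm x₃ with hz₃
  set z₄ := f.symm x₄ with hz₄
  have hx₁ : x₁ = f z₁ := (f.apply_symm_apply x₁).symm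
  have hx₂ : x₂ = f z₂ := (f.apply_symm_apply x₂).symm
  have hx₃ : x₃ = f z₃ := (f.apply_symm_apply x₃).symm
  have hx₄ : x₄ = f z₄ := (f.apply_symm_apply x₄).symm
  have hfa : ∀ p q r : ℂ, ∠ (f p) (f q) (f r) = ∠ p q r := fun p q r =>
    f.toAffineIsometryEquiv.toAffineIsometry.angle_map p q r
  -- distances
  have hd12 : dist z₁ z₂ = dist x₁ x₂ := f.symm.dist_map x₁ x₂
  have hd13 : dist z₁ z₃ = dist x₁ x₃ := f.symm.dist_map x₁ x₃
  have hd14 : dist z₁ z₄ = dist x₁ x₄ := f.symm.dist_map x₁ x₄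
  have hd23 : dist z₂ z₃ = dist x₂ x₃ := f.symm.dist_map x₂ x₃
  have hd24 : dist z₂ z₄ = dist x₂ x₄ := f.symm.dist_map x₂ x₄
  have hd34 : dist z₃ z₄ = dist x₃ x₄ := f.symm.dist_map x₃ x₄
  -- angles
  have ha124 : ∠ x₁ x₂ x₄ = ∠ z₁ z₂ z₄ := by rw [hx₁, hx₂, hx₄]; exact hfa _ _ _
  have ha134 : ∠ x₁ x₃ x₄ = ∠ z₁ z₃ z₄ := by rw [hx₁, hx₃, hx₄]; exact hfa _ _ _
  have ha324 : ∠ x₃ x₂ x₄ = ∠ z₃ z₂ z₄ := by rw [hx₂, hx₃, hx₄]; exact hfa _ _ _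
  have ha314 : ∠ x₃ x₁ x₄ = ∠ z₃ z₁ z₄ := by rw [hx₁, hx₃, hx₄]; exact hfa _ _ _
  have ha214 : ∠ x₂ x₁ x₄ = ∠ z₂ z₁ z₄ := by rw [hx₁, hx₂, hx₄]; exact hfa _ _ _
  have ha234 : ∠ x₂ x₃ x₄ = ∠ z₂ z₃ z₄ := by rw [hx₂, hx₃, hx₄]; exact hfa _ _ _
  -- distinctness in ℂ
  have hz12 : z₁ ≠ z₂ := fun e => hx12 (by rw [hx₁, hx₂, e])
  have hz13 : z₁ ≠ z₃ := fun e => hx13 (by rw [hx₁, hx₃, e])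
  have hz14 : z₁ ≠ z₄ := fun e => hx14 (by rw [hx₁, hx₄, e])
  have hz23 : z₂ ≠ z₃ := fun e => hx23 (by rw [hx₂, hx₃, e])
  have hz24 : z₂ ≠ z₄ := fun e => hx24 (by rw [hx₂, hx₄, e])
  have hz34 : z₃ ≠ z₄ := fun e => hx34 (by rw [hx₃, hx₄, e])
  -- noncollinearity facts in ℂ
  have nA : cr (z₃ - z₁) (z₂ - z₁) ≠ 0 := by
    refine cr_ne_zero f ?_
    rw [← hx₁, ← hx₃, ← hx₂, Set.pair_comm (x₃ : EuclideanSpace ℝ (Fin 2)) x₂]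
    exact hc123
  have nB : cr (z₃ - z₁) (z₄ - z₁) ≠ 0 := by
    refine cr_ne_zero f ?_
    rw [← hx₁, ← hx₃, ← hx₄]
    exact hc134
  have nL1 : cr (z₄ - z₂) (z₁ - z₂) ≠ 0 := by
    refine cr_ne_zero f ?_
    rw [← hx₂, ← hx₄, ← hx₁]
    have : ({x₂, x₄, x₁} : Set (EuclideanSpace ℝ (Fin 2))) = {x₁, x₂, x₄} := by
      ext y; simp only [Set.mem_insert_iff, Set.mem_singleton_iff]; tauto
    rw [this]
    exact hc124
  have nL3 : cr (z₄ - z₂) (z₃ - z₂) ≠ 0 := by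
    refine cr_ne_zero f ?_
    rw [← hx₂, ← hx₄, ← hx₃]
    have : ({x₂, x₄, x₃} : Set (EuclideanSpace ℝ (Fin 2))) = {x₂, x₃, x₄} := by
      ext y; simp only [Set.mem_insert_iff, Set.mem_singleton_iff]; tauto
    rw [this]
    exact hc234
  -- the diagonal intersection point, transported to ℂ
  obtain ⟨s, s', hs, hs', hss, H1⟩ := hm1
  obtain ⟨t, t', ht, ht', htt, H2⟩ := hm2
  have hmc1 : f.symm m = s • z₁ + s' • z₃ := by
    rw [← H1, map_add, map_smul, map_smul]
  have hmc2 : f.symm m = t • z₂ + t' • z₄ := by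
    rw [← H2, map_add, map_smul, map_smul]
  have hcs : (s : ℂ) + (s' : ℂ) = 1 := by exact_mod_cast congrArg (Complex.ofReal) hss
  have hct : (t : ℂ) + (t' : ℂ) = 1 := by exact_mod_cast congrArg (Complex.ofReal) htt
  have hμ1 : f.symm m - z₁ = s' • (z₃ - z₁) := by
    rw [hmc1]
    simp only [Complex.real_smul]
    linear_combination z₁ * hcs
  have hμ2 : f.symm m - z₁ = t • (z₂ - z₁) + t' • (z₄ - z₁) := by
    rw [hmc2]
    simp only [Complex.real_smul]
    linear_combination z₁ * hct
  have hν1 : f.symm m - z₂ = t' • (z₄ - z₂) := by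
    rw [hmc2]
    simp only [Complex.real_smul]
    linear_combination z₂ * hct
  have hν2 : f.symm m - z₂ = s • (z₁ - z₂) + s' • (z₃ - z₂) := by
    rw [hmc1]
    simp only [Complex.real_smul]
    linear_combination z₂ * hcs
  have hkey1 : t * cr (z₃ - z₁) (z₂ - z₁) + t' * cr (z₃ - z₁) (z₄ - z₁) = 0 := by
    calc t * cr (z₃ - z₁) (z₂ - z₁) + t' * cr (z₃ - z₁) (z₄ - z₁)
        = cr (z₃ - z₁) (t • (z₂ - z₁) + t' • (z₄ - z₁)) := (cr_comb _ _ _ _ _).symm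
      _ = cr (z₃ - z₁) (s' • (z₃ - z₁)) := by rw [← hμ2, hμ1]
      _ = 0 := cr_smul_self _ _
  have hkey2 : s * cr (z₄ - z₂) (z₁ - z₂) + s' * cr (z₄ - z₂) (z₃ - z₂) = 0 := by
    calc s * cr (z₄ - z₂) (z₁ - z₂) + s' * cr (z₄ - z₂) (z₃ - z₂)
        = cr (z₄ - z₂) (s • (z₁ - z₂) + s' • (z₃ - z₂)) := (cr_comb _ _ _ _ _).symm
      _ = cr (z₄ - z₂) (t' • (z₄ - z₂)) := by rw [← hν2, hν1]
      _ = 0 := cr_smul_self _ _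
  have hop1 : cr (z₃ - z₁) (z₂ - z₁) * cr (z₃ - z₁) (z₄ - z₁) < 0 :=
    opp_sign ht ht' htt nA nB hkey1
  have hop2 : cr (z₄ - z₂) (z₁ - z₂) * cr (z₄ - z₂) (z₃ - z₂) < 0 :=
    opp_sign hs hs' hss nL1 nL3 hkey2
  -- apply the key lemma
  have hanglez : ∠ z₂ z₁ z₄ + ∠ z₂ z₃ z₄ ≤ Real.pi := by
    rw [← ha214, ← ha234]; exact hangle
  obtain ⟨P₀, Q₀, R₀, d1, d2, d3, a1, a2, a3⟩ :=
    crelle_key₂ z₁ z₂ z₃ z₄ hz12 hz13 hz14 hz23 hz24 hz34 hop1 hop2 hanglez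
  rw [hd12, hd34] at d1
  rw [hd13, hd24] at d2
  rw [hd14, hd23] at d3
  -- positivity of the three products
  have hs₁ : 0 < dist x₁ x₂ * dist x₃ x₄ := mul_pos (dist_pos.2 hx12) (dist_pos.2 hx34)
  have hs₂ : 0 < dist x₁ x₃ * dist x₂ x₄ := mul_pos (dist_pos.2 hx13) (dist_pos.2 hx24)
  have hs₃ : 0 < dist x₁ x₄ * dist x₂ x₃ := mul_pos (dist_pos.2 hx14) (dist_pos.2 hx23)
  have hP₀Q₀ : P₀ ≠ Q₀ := by rw [← dist_pos, d1]; exact hs₁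
  have hP₀R₀ : P₀ ≠ R₀ := by rw [← dist_pos, d2]; exact hs₂
  have hQ₀R₀ : Q₀ ≠ R₀ := by rw [← dist_pos, d3]; exact hs₃
  have hmodel : ({dist P₀ Q₀, dist P₀ R₀, dist Q₀ R₀} : Multiset ℝ) =
      ({dist x₁ x₂ * dist x₃ x₄, dist x₁ x₃ * dist x₂ x₄,
        dist x₁ x₄ * dist x₂ x₃} : Multiset ℝ) := by
    rw [d1, d2, d3]
  constructor
  · refine ⟨f P₀, f Q₀, f R₀, ?_⟩
    rw [f.dist_map, f.dist_map, f.dist_map]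
    exact hmodel
  · intro P Q R hPQR
    have hmem : ∀ y : ℝ, y ∈ ({dist P Q, dist P R, dist Q R} : Multiset ℝ) → 0 < y := by
      intro y hy
      rw [hPQR] at hy
      simp only [Multiset.insert_eq_cons, Multiset.mem_cons, Multiset.mem_singleton] at hy
      rcases hy with rfl | rfl | rfl
      · exact hs₁
      · exact hs₂
      · exact hs₃
    have hPQ : P ≠ Q := by
      rw [← dist_pos]
      exact hmem _ (by simp)
    have hPR : P ≠ R := by
      rw [← dist_pos]
      refine hmem _ ?_
      simp only [Multiset.insert_eq_cons, Multiset.mem_cons, Multiset.mem_singleton]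
      tauto
    have hQR : Q ≠ R := by
      rw [← dist_pos]
      refine hmem _ ?_
      simp only [Multiset.insert_eq_cons, Multiset.mem_cons, Multiset.mem_singleton]
      tauto
    have e₀ := tri_angles_map P Q R hPQ hPR hQR
    have e₁ := tri_angles_map P₀ Q₀ R₀ hP₀Q₀ hP₀R₀ hQ₀R₀
    rw [e₀, hPQR, ← hmodel, ← e₁, a1, a2, a3, ← ha124, ← ha134, ← ha214, ← ha234,
      ← ha324, ← ha314]
    exact multiset_perm23 _ _ _
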